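/- Let H be a traceless Hermitian operator on (ℂ²)^{⊗n} with k-local Pauli expansion as above, each qubit in at most ℓ terms. Then λ_min(H) ≤ −3^{−k/2} ‖Ĥ‖₁ / (4kℓ). -/

import Mathlib

noncomputable section
open Complex Matrix
open scoped Classical

/-- Pauli X matrix. -/
def σX : Matrix (Fin 2) (Fin 2) ℂ := !![0, 1; 1, 0]
/-- Pauli Y matrix. -/
def σY : Matrix (Fin 2) (Fin 2) ℂ := !![0, -I; I, 0]
/-- Pauli Z matrix. -/
def σZ : Matrix (Fin 2) (Fin 2) ℂ := !![1, 0; 0, -1]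

/-- The four Pauli matrices I, X, Y, Z. -/
def pauli : Fin 4 → Matrix (Fin 2) (Fin 2) ℂ := ![1, σX, σY, σZ]

/-- The n-qubit Pauli string s₁ ⊗ s₂ ⊗ ⋯ ⊗ sₙ, as a matrix indexed by Fin n → Fin 2. -/
def pauliString {n : ℕ} (s : Fin n → Fin 4) :
    Matrix (Fin n → Fin 2) (Fin n → Fin 2) ℂ :=
  fun v w => ∏ i, pauli (s i) (v i) (w i)

/-- The Hamiltonian H = Σ_s Ĥ_s s₁⊗⋯⊗sₙ with real Pauli coefficients Ĥ. -/
def hamOf {n : ℕ} (Hhat : (Fin n → Fin 4) → ℝ) :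
    Matrix (Fin n → Fin 2) (Fin n → Fin 2) ℂ :=
  ∑ s : Fin n → Fin 4, (Hhat s : ℂ) • pauliString s

/-- The weight |s| of a Pauli string: the number of non-identity tensor factors. -/
def weight {n : ℕ} (s : Fin n → Fin 4) : ℕ :=
  (Finset.univ.filter (fun i => s i ≠ 0)).card

/-- The product state ψ₁ ⊗ ⋯ ⊗ ψₙ. -/
def prodState {n : ℕ} (ψ : Fin n → Fin 2 → ℂ) : (Fin n → Fin 2) → ℂ :=
  fun v => ∏ i, ψ i (v i)

/-- Expectation value ⟨Ψ|M|Ψ⟩ for an n-qubit operator. -/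
def expValN {n : ℕ} (M : Matrix (Fin n → Fin 2) (Fin n → Fin 2) ℂ)
    (Ψ : (Fin n → Fin 2) → ℂ) : ℂ :=
  ∑ v, ∑ w, (starRingEnd ℂ) (Ψ v) * M v w * Ψ w

/-- The state |ψ₊₊⟩ = (√(3+√3)|0⟩ + e^{iπ/4}√(3-√3)|1⟩)/√6. -/
def ψpp : Fin 2 → ℂ :=
  ![(Real.sqrt (3 + Real.sqrt 3) : ℂ) / (Real.sqrt 6 : ℂ),
    Complex.exp (Real.pi * I / 4) * (Real.sqrt (3 - Real.sqrt 3) : ℂ) / (Real.sqrt 6 : ℂ)]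

/-- Pauli correction selecting a tetrahedron state: (+,+)↦I, (−,+)↦Z, (+,−)↦X, (−,−)↦Y. -/
def tetraM (a b : ℝ) : Matrix (Fin 2) (Fin 2) ℂ :=
  if a = 1 then (if b = 1 then 1 else σX) else (if b = 1 then σZ else σY)

/-- The tetrahedron state labelled by (a,b) ∈ {±1}². -/
def tetra (a b : ℝ) : Fin 2 → ℂ := (tetraM a b).mulVec ψpp


section Aux
variable {n : ℕ}
def pmA : Fin 4 → ℝ := ![1, 1, -1, -1]
def pmB : Fin 4 → ℝ := ![1, -1, 1, -1]
def sgn (p c : Fin 4) : ℝ := ![1, pmA c, pmA c * pmB c, pmB c] p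
def kadd : Fin 4 → Fin 4 → Fin 4 :=
  ![![0,1,2,3], ![1,0,3,2], ![2,3,0,1], ![3,2,1,0]]

lemma kadd_zero (p : Fin 4) : kadd p 0 = p := by fin_cases p <;> rfl
lemma kadd_kadd (p q : Fin 4) : kadd (kadd p q) q = p := by
  fin_cases p <;> fin_cases q <;> rfl
lemma kadd_eq_zero_iff (p q : Fin 4) : kadd p q = 0 ↔ p = q := by
  fin_cases p <;> fin_cases q <;> simp [kadd]
lemma kadd_eq_right_iff (p q : Fin 4) : kadd p q = q ↔ p = 0 := by
  fin_cases p <;> fin_cases q <;> simp [kadd]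
lemma sgn_zero (c : Fin 4) : sgn 0 c = 1 := rfl
lemma sgn_mul (p q c : Fin 4) : sgn p c * sgn q c = sgn (kadd p q) c := by
  fin_cases p <;> fin_cases q <;> fin_cases c <;> norm_num [sgn, kadd, pmA, pmB] <;> simp
lemma abs_sgn (p c : Fin 4) : |sgn p c| = 1 := by
  fin_cases p <;> fin_cases c <;> norm_num [sgn, pmA, pmB]
lemma sum_sgn (p : Fin 4) : ∑ c : Fin 4, sgn p c = if p = 0 then 4 else 0 := by
  fin_cases p
  · norm_num [Fin.sum_univ_four, sgn, pmA, pmB]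
  all_goals rw [if_neg (by decide)] <;> norm_num [Fin.sum_univ_four, sgn, pmA, pmB] <;> simp <;> norm_num

variable {n : ℕ}

def chr (s c : Fin n → Fin 4) : ℝ := ∏ i, sgn (s i) (c i)

def Fval (W : (Fin n → Fin 4) → ℝ) (c : Fin n → Fin 4) : ℝ := ∑ s, W s * chr s c

lemma sum_prod_fn {κ : Type*} [Fintype κ] {R : Type*} [CommSemiring R] (g : Fin n → κ → R) :
    ∑ x : Fin n → κ, ∏ i, g i (x i) = ∏ i, ∑ y, g i y := (Fintype.prod_sum g).symm

lemma chr_zero_left (x : Fin n → Fin 4) : chr (fun _ => 0) x = 1 := by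
  simp [chr, sgn_zero]

lemma abs_chr (s c : Fin n → Fin 4) : |chr s c| = 1 := by
  rw [chr, Finset.abs_prod]
  simp [abs_sgn]

lemma pauliInnerSum (s₀ t s c : Fin n → Fin 4) (ht : ∀ i, s₀ i = 0 → t i = 0) :
    ∑ x : Fin n → Fin 4, chr t x * chr s (fun i => if s₀ i ≠ 0 then x i else c i)
    = if (∀ i, s₀ i ≠ 0 → s i = t i) then (4:ℝ)^n * chr (fun i => kadd (s i) (t i)) c
      else 0 := by
  have h1 : ∀ x : Fin n → Fin 4, chr t x * chr s (fun i => if s₀ i ≠ 0 then x i else c i)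
      = ∏ i, (sgn (t i) (x i) * sgn (s i) (if s₀ i ≠ 0 then x i else c i)) := by
    intro x; rw [chr, chr, ← Finset.prod_mul_distrib]
  rw [Finset.sum_congr rfl (fun x _ => h1 x),
    sum_prod_fn (fun i y => sgn (t i) y * sgn (s i) (if s₀ i ≠ 0 then y else c i))]
  have h2 : ∀ i, (∑ y : Fin 4, sgn (t i) y * sgn (s i) (if s₀ i ≠ 0 then y else c i))
      = if s₀ i ≠ 0 then (if s i = t i then 4 else 0)
        else 4 * sgn (kadd (s i) (t i)) (c i) := by
    intro i
    by_cases h : s₀ i ≠ 0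
    · rw [if_pos h]
      rw [Finset.sum_congr rfl (fun y _ => by rw [if_pos h, mul_comm, sgn_mul]),
        sum_sgn]
      simp only [kadd_eq_zero_iff]
    · rw [if_neg h]
      push_neg at h
      have h3 : ∀ y : Fin 4, sgn (t i) y * sgn (s i) (if s₀ i ≠ 0 then y else c i)
          = sgn (s i) (c i) := by
        intro y
        rw [ht i h, sgn_zero, one_mul, if_neg (by simp [h])]
      rw [Finset.sum_congr rfl (fun y _ => h3 y), Finset.sum_const, Finset.card_univ]
      rw [ht i h, kadd_zero]
      simp
  rw [Finset.prod_congr rfl (fun i _ => h2 i)]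
  by_cases hA : ∀ i, s₀ i ≠ 0 → s i = t i
  · rw [if_pos hA]
    have h4 : ∀ i, (if s₀ i ≠ 0 then (if s i = t i then (4:ℝ) else 0)
        else 4 * sgn (kadd (s i) (t i)) (c i)) = 4 * sgn (kadd (s i) (t i)) (c i) := by
      intro i
      by_cases h : s₀ i ≠ 0
      · rw [if_pos h, if_pos (hA i h), (kadd_eq_zero_iff _ _).2 (hA i h), sgn_zero, mul_one]
      · rw [if_neg h]
    rw [Finset.prod_congr rfl (fun i _ => h4 i), Finset.prod_mul_distrib, Finset.prod_const,
      Finset.card_univ, Fintype.card_fin, chr]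
  · rw [if_neg hA]
    push_neg at hA
    obtain ⟨i, hi, hne⟩ := hA
    exact Finset.prod_eq_zero (Finset.mem_univ i) (by rw [if_pos hi, if_neg hne])

lemma restrict_eq (W : (Fin n → Fin 4) → ℝ) (s₀ : Fin n → Fin 4) (ε : ℝ) (c : Fin n → Fin 4) :
    ∑ x : Fin n → Fin 4, (1 + ε * chr s₀ x) * Fval W (fun i => if s₀ i ≠ 0 then x i else c i)
      = 4^n * Fval (fun u => if ∀ i, s₀ i ≠ 0 → u i = 0
          then W u + ε * W (fun i => kadd (u i) (s₀ i)) else 0) c := by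
  have e1 : ∀ s : Fin n → Fin 4,
      (∑ x : Fin n → Fin 4, chr s (fun i => if s₀ i ≠ 0 then x i else c i))
      = if (∀ i, s₀ i ≠ 0 → s i = 0) then (4:ℝ)^n * chr s c else 0 := by
    intro s
    have h := pauliInnerSum s₀ (fun _ => 0) s c (fun i _ => rfl)
    simp only [chr_zero_left, one_mul, kadd_zero] at h
    exact h
  have e2 : ∀ s : Fin n → Fin 4,
      (∑ x : Fin n → Fin 4, chr s₀ x * chr s (fun i => if s₀ i ≠ 0 then x i else c i))
      = if (∀ i, s₀ i ≠ 0 → s i = s₀ i) then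
          (4:ℝ)^n * chr (fun i => kadd (s i) (s₀ i)) c else 0 :=
    fun s => pauliInnerSum s₀ s₀ s c (fun _ h => h)
  have step1 : ∑ x : Fin n → Fin 4,
        (1 + ε * chr s₀ x) * Fval W (fun i => if s₀ i ≠ 0 then x i else c i)
      = (∑ s, W s * ∑ x : Fin n → Fin 4, chr s (fun i => if s₀ i ≠ 0 then x i else c i))
        + ε * ∑ s, W s * ∑ x : Fin n → Fin 4,
            chr s₀ x * chr s (fun i => if s₀ i ≠ 0 then x i else c i) := by
    simp only [Fval, Finset.mul_sum]
    rw [Finset.sum_comm, ← Finset.sum_add_distrib]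
    refine Finset.sum_congr rfl fun s _ => ?_
    rw [← Finset.sum_add_distrib]
    refine Finset.sum_congr rfl fun x _ => ?_
    ring
  rw [step1]
  have hA : (∑ s, W s * ∑ x : Fin n → Fin 4, chr s (fun i => if s₀ i ≠ 0 then x i else c i))
      = ∑ s, (if (∀ i, s₀ i ≠ 0 → s i = 0) then W s * ((4:ℝ)^n * chr s c) else 0) :=
    Finset.sum_congr rfl fun s _ => by rw [e1 s, mul_ite, mul_zero]
  let eqv : (Fin n → Fin 4) ≃ (Fin n → Fin 4) :=
    ⟨fun u i => kadd (u i) (s₀ i), fun u i => kadd (u i) (s₀ i),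
      fun u => funext fun i => kadd_kadd _ _, fun u => funext fun i => kadd_kadd _ _⟩
  have hB : (∑ s, W s * ∑ x : Fin n → Fin 4,
        chr s₀ x * chr s (fun i => if s₀ i ≠ 0 then x i else c i))
      = ∑ u, (if (∀ i, s₀ i ≠ 0 → u i = 0) then
          W (fun i => kadd (u i) (s₀ i)) * ((4:ℝ)^n * chr u c) else 0) := by
    rw [Finset.sum_congr rfl (fun s _ => by rw [e2 s, mul_ite, mul_zero])]
    refine (Fintype.sum_equiv eqv _ _ ?_).symm
    intro u
    have h1 : (fun i => kadd (kadd (u i) (s₀ i)) (s₀ i)) = u :=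
      funext fun i => kadd_kadd _ _
    have h2 : (∀ i, s₀ i ≠ 0 → kadd (u i) (s₀ i) = s₀ i) ↔ (∀ i, s₀ i ≠ 0 → u i = 0) :=
      forall_congr' fun i => imp_congr_right fun _ => kadd_eq_right_iff _ _
    show _ = if (∀ i, s₀ i ≠ 0 → kadd (u i) (s₀ i) = s₀ i) then
        W (fun i => kadd (u i) (s₀ i)) * ((4:ℝ)^n * chr (fun i => kadd (kadd (u i) (s₀ i)) (s₀ i)) c) else 0
    rw [h1, if_congr h2 rfl rfl]
  rw [hA, hB]
  simp only [Fval, Finset.mul_sum]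
  rw [← Finset.sum_add_distrib]
  refine Finset.sum_congr rfl fun u _ => ?_
  by_cases hP : ∀ i, s₀ i ≠ 0 → u i = 0
  · rw [if_pos hP, if_pos hP, if_pos hP]; ring
  · rw [if_neg hP, if_neg hP, if_neg hP]; ring

lemma zero_kadd (p : Fin 4) : kadd 0 p = p := by fin_cases p <;> rfl

lemma chr_zero (c : Fin n → Fin 4) : chr 0 c = 1 := by
  simp [chr, sgn_zero]

lemma sum_abs_le_of_bound (W : (Fin n → Fin 4) → ℝ) (S : Finset (Fin n → Fin 4))
    (g : (Fin n → Fin 4) → (Fin n → Fin 4)) (M : ℝ)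
    (hb : ∀ u ∈ S, W (g u) ≠ 0 → |W (g u)| ≤ M) :
    ∑ u ∈ S, |W (g u)| ≤ (S.filter (fun u => W (g u) ≠ 0)).card * M := by
  rw [← Finset.sum_filter_of_ne (p := fun u => W (g u) ≠ 0)
    (fun x _ h => by simpa using abs_ne_zero.1 h)]
  calc ∑ u ∈ S.filter (fun u => W (g u) ≠ 0), |W (g u)|
      ≤ (S.filter (fun u => W (g u) ≠ 0)).card • M := by
        refine Finset.sum_le_card_nsmul _ _ _ ?_
        intro x hx
        exact hb x (Finset.mem_filter.1 hx).1 (Finset.mem_filter.1 hx).2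
    _ = _ := nsmul_eq_mul _ _

lemma Fval_of_empty (W : (Fin n → Fin 4) → ℝ) (r : ℝ)
    (hemp : ∀ s : Fin n → Fin 4, s ≠ 0 → W s = 0) :
    Fval W 0 ≤ W 0 -
      (∑ s ∈ Finset.univ.filter (fun s : Fin n → Fin 4 => s ≠ 0), |W s|) / r := by
  have h1 : Fval W 0 = W 0 := by
    rw [Fval, Finset.sum_eq_single (0 : Fin n → Fin 4)]
    · rw [chr_zero, mul_one]
    · intro s _ hs; rw [hemp s hs, zero_mul]
    · intro h; exact absurd (Finset.mem_univ _) h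
  have h2 : (∑ s ∈ Finset.univ.filter (fun s : Fin n → Fin 4 => s ≠ 0), |W s|) = 0 :=
    Finset.sum_eq_zero fun s hs => abs_eq_zero.2 (hemp s (Finset.mem_filter.1 hs).2)
  rw [h1, h2, zero_div, sub_zero]

lemma key_step (k l : ℕ) (hk : 1 ≤ k) (hl : 1 ≤ l) :
    ∀ N : ℕ, ∀ W : (Fin n → Fin 4) → ℝ,
      (Finset.univ.filter (fun s : Fin n → Fin 4 => W s ≠ 0 ∧ s ≠ 0)).card ≤ N →
      (∀ s, W s ≠ 0 → (Finset.univ.filter (fun i => s i ≠ 0)).card ≤ k) →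
      (∀ i, (Finset.univ.filter (fun s : Fin n → Fin 4 => W s ≠ 0 ∧ s i ≠ 0)).card ≤ l) →
      ∃ c, Fval W c ≤ W 0 -
        (∑ s ∈ Finset.univ.filter (fun s : Fin n → Fin 4 => s ≠ 0), |W s|) / (2*k*l) := by
  intro N
  induction N with
  | zero =>
    intro W hcard _ _
    refine ⟨0, Fval_of_empty W _ ?_⟩
    intro s hs
    by_contra hWs
    have hmem : s ∈ Finset.univ.filter (fun s : Fin n → Fin 4 => W s ≠ 0 ∧ s ≠ 0) :=
      Finset.mem_filter.2 ⟨Finset.mem_univ _, hWs, hs⟩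
    have := Finset.card_pos.2 ⟨s, hmem⟩
    omega
  | succ N ih =>
    intro W hcard hdeg hocc
    by_cases hemp : ∀ s : Fin n → Fin 4, s ≠ 0 → W s = 0
    · exact ⟨0, Fval_of_empty W _ hemp⟩
    push_neg at hemp
    obtain ⟨s₁, hs₁ne, hWs₁⟩ := hemp
    set A : Finset (Fin n → Fin 4) :=
      Finset.univ.filter (fun s : Fin n → Fin 4 => W s ≠ 0 ∧ s ≠ 0) with hAdef
    have hAne : A.Nonempty := ⟨s₁, Finset.mem_filter.2 ⟨Finset.mem_univ _, hWs₁, hs₁ne⟩⟩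
    obtain ⟨s₀, hs₀A, hmax'⟩ := Finset.exists_max_image A (fun s => |W s|) hAne
    obtain ⟨hW0ne, hs0ne⟩ := (Finset.mem_filter.1 hs₀A).2
    have hmax : ∀ s : Fin n → Fin 4, W s ≠ 0 → s ≠ 0 → |W s| ≤ |W s₀| := fun s h1 h2 =>
      hmax' s (Finset.mem_filter.2 ⟨Finset.mem_univ _, h1, h2⟩)
    obtain ⟨i₀, hi₀⟩ : ∃ i, s₀ i ≠ 0 := by
      by_contra h; push_neg at h; exact hs0ne (funext fun i => h i)
    set ε : ℝ := if 0 < W s₀ then -1 else 1 with hεdef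
    have hεW : ε * W s₀ = -|W s₀| := by
      by_cases h : 0 < W s₀
      · rw [hεdef, if_pos h, abs_of_pos h]; ring
      · rw [hεdef, if_neg h, abs_of_neg (lt_of_le_of_ne (not_lt.1 h) hW0ne)]; ring
    have hεabs : |ε| = 1 := by
      by_cases h : 0 < W s₀ <;> simp [hεdef, h]
    set W' : (Fin n → Fin 4) → ℝ := fun u => if ∀ i, s₀ i ≠ 0 → u i = 0
      then W u + ε * W (fun i => kadd (u i) (s₀ i)) else 0 with hW'def
    have hW'ne : ∀ u, W' u ≠ 0 →
        (∀ i, s₀ i ≠ 0 → u i = 0) ∧ (W u ≠ 0 ∨ W (fun i => kadd (u i) (s₀ i)) ≠ 0) := by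
      intro u hu
      by_cases hP : ∀ i, s₀ i ≠ 0 → u i = 0
      · refine ⟨hP, ?_⟩
        by_contra h
        push_neg at h
        apply hu
        rw [hW'def]
        simp only [if_pos hP, h.1, h.2]
        ring
      · exact absurd (by rw [hW'def]; simp only [if_neg hP]) hu
    -- the injection from new active terms to old ones
    set f : (Fin n → Fin 4) → (Fin n → Fin 4) :=
      fun s => if W s ≠ 0 then s else (fun i => kadd (s i) (s₀ i)) with hfdef
    have hinj : ∀ s, W' s ≠ 0 → ∀ s', W' s' ≠ 0 → f s = f s' → s = s' := by
      intro s hs s' hs' hff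
      obtain ⟨hPs, _⟩ := hW'ne s hs
      obtain ⟨hPs', _⟩ := hW'ne s' hs'
      simp only [hfdef] at hff
      by_cases h1 : W s ≠ 0 <;> by_cases h2 : W s' ≠ 0
      · rwa [if_pos h1, if_pos h2] at hff
      · rw [if_pos h1, if_neg h2] at hff
        exfalso
        have h3 : s i₀ = kadd (s' i₀) (s₀ i₀) := congrFun hff i₀
        rw [hPs i₀ hi₀, hPs' i₀ hi₀, zero_kadd] at h3
        exact hi₀ h3.symm
      · rw [if_neg h1, if_pos h2] at hff
        exfalso
        have h3 : kadd (s i₀) (s₀ i₀) = s' i₀ := congrFun hff i₀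
        rw [hPs i₀ hi₀, zero_kadd, hPs' i₀ hi₀] at h3
        exact hi₀ h3
      · rw [if_neg h1, if_neg h2] at hff
        funext i
        have h3 : kadd (s i) (s₀ i) = kadd (s' i) (s₀ i) := congrFun hff i
        rw [← kadd_kadd (s i) (s₀ i), h3, kadd_kadd]
    have hfActive : ∀ s, W' s ≠ 0 → W (f s) ≠ 0 := by
      intro s hs
      obtain ⟨_, hWs⟩ := hW'ne s hs
      simp only [hfdef]
      by_cases h1 : W s ≠ 0
      · rwa [if_pos h1]
      · rw [if_neg h1]
        rcases hWs with h | h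
        · exact absurd h h1
        · exact h
    -- (a) the number of active terms decreases
    have hcard' : (Finset.univ.filter
        (fun s : Fin n → Fin 4 => W' s ≠ 0 ∧ s ≠ 0)).card ≤ N := by
      have hle : (Finset.univ.filter
          (fun s : Fin n → Fin 4 => W' s ≠ 0 ∧ s ≠ 0)).card ≤ (A.erase s₀).card := by
        refine Finset.card_le_card_of_injOn f ?_ ?_
        · intro s hs
          obtain ⟨hW's, hsne⟩ := (Finset.mem_filter.1 hs).2
          obtain ⟨hPs, _⟩ := hW'ne s hW's
          refine Finset.mem_erase.2 ⟨?_, ?_⟩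
          · -- f s ≠ s₀
            simp only [hfdef]
            by_cases h1 : W s ≠ 0
            · rw [if_pos h1]
              intro heq
              exact hi₀ (by rw [← heq]; exact hPs i₀ hi₀)
            · rw [if_neg h1]
              intro heq
              apply hsne
              funext i
              have h3 : kadd (s i) (s₀ i) = s₀ i := congrFun heq i
              exact (kadd_eq_right_iff _ _).1 h3
          · refine Finset.mem_filter.2 ⟨Finset.mem_univ _, hfActive s hW's, ?_⟩
            -- f s ≠ 0
            simp only [hfdef]
            by_cases h1 : W s ≠ 0
            · rwa [if_pos h1]
            · rw [if_neg h1]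
              intro heq
              have h3 : kadd (s i₀) (s₀ i₀) = 0 := congrFun heq i₀
              rw [hPs i₀ hi₀, zero_kadd] at h3
              exact hi₀ h3
        · intro s hs s' hs' hff
          exact hinj s (Finset.mem_filter.1 (Finset.mem_coe.1 hs)).2.1
            s' (Finset.mem_filter.1 (Finset.mem_coe.1 hs')).2.1 hff
      have : (A.erase s₀).card = A.card - 1 := Finset.card_erase_of_mem hs₀A
      omega
    -- (b) degrees are preserved
    have hdeg' : ∀ s, W' s ≠ 0 →
        (Finset.univ.filter (fun i => s i ≠ 0)).card ≤ k := by
      intro s hs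
      obtain ⟨hPs, _⟩ := hW'ne s hs
      by_cases h1 : W s ≠ 0
      · exact hdeg s h1
      · have h2 : W (fun i => kadd (s i) (s₀ i)) ≠ 0 := by
          have := hfActive s hs
          simp only [hfdef, if_neg h1] at this
          exact this
        refine le_trans (Finset.card_le_card ?_) (hdeg _ h2)
        intro i hi
        have hsi : s i ≠ 0 := (Finset.mem_filter.1 hi).2
        have h0 : s₀ i = 0 := by
          by_contra hc
          exact hsi (hPs i hc)
        refine Finset.mem_filter.2 ⟨Finset.mem_univ _, ?_⟩
        rwa [h0, kadd_zero]
    -- (c) occurrences are preserved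
    have hocc' : ∀ i, (Finset.univ.filter
        (fun s : Fin n → Fin 4 => W' s ≠ 0 ∧ s i ≠ 0)).card ≤ l := by
      intro i
      refine le_trans (Finset.card_le_card_of_injOn f ?_ ?_) (hocc i)
      · intro s hs
        obtain ⟨hW's, hsi⟩ := (Finset.mem_filter.1 hs).2
        obtain ⟨hPs, _⟩ := hW'ne s hW's
        have h0 : s₀ i = 0 := by
          by_contra hc
          exact hsi (hPs i hc)
        refine Finset.mem_filter.2 ⟨Finset.mem_univ _, hfActive s hW's, ?_⟩
        simp only [hfdef]
        by_cases h1 : W s ≠ 0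
        · rwa [if_pos h1]
        · rw [if_neg h1]
          show kadd (s i) (s₀ i) ≠ 0
          rwa [h0, kadd_zero]
      · intro s hs s' hs' hff
        exact hinj s (Finset.mem_filter.1 (Finset.mem_coe.1 hs)).2.1
          s' (Finset.mem_filter.1 (Finset.mem_coe.1 hs')).2.1 hff
    -- (d) mass bound
    set Φ : Finset (Fin n → Fin 4) :=
      Finset.univ.filter (fun s : Fin n → Fin 4 => s ≠ 0) with hΦdef
    set g : (Fin n → Fin 4) → (Fin n → Fin 4) :=
      fun s => (fun i => kadd (s i) (s₀ i)) with hgdef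
    set Dfin : Finset (Fin n → Fin 4) := Finset.univ.filter
      (fun s : Fin n → Fin 4 => W s ≠ 0 ∧ s ≠ s₀ ∧ ∃ i, s₀ i ≠ 0 ∧ s i ≠ 0) with hDdef
    have hDcard : Dfin.card ≤ k * (l - 1) := by
      have hsub : Dfin ⊆ (Finset.univ.filter (fun i => s₀ i ≠ 0)).biUnion
          (fun i => (Finset.univ.filter
            (fun s : Fin n → Fin 4 => W s ≠ 0 ∧ s i ≠ 0)).erase s₀) := by
        intro s hs
        obtain ⟨hWs, hne, i, hi1, hi2⟩ := (Finset.mem_filter.1 hs).2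
        exact Finset.mem_biUnion.2 ⟨i, Finset.mem_filter.2 ⟨Finset.mem_univ _, hi1⟩,
          Finset.mem_erase.2 ⟨hne, Finset.mem_filter.2 ⟨Finset.mem_univ _, hWs, hi2⟩⟩⟩
      refine le_trans (Finset.card_le_card hsub) (le_trans Finset.card_biUnion_le ?_)
      calc ∑ i ∈ Finset.univ.filter (fun i => s₀ i ≠ 0),
            ((Finset.univ.filter
              (fun s : Fin n → Fin 4 => W s ≠ 0 ∧ s i ≠ 0)).erase s₀).card
          ≤ ∑ _i ∈ Finset.univ.filter (fun i => s₀ i ≠ 0), (l - 1) := by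
            refine Finset.sum_le_sum ?_
            intro i hi
            have hi' : s₀ i ≠ 0 := (Finset.mem_filter.1 hi).2
            have hmem : s₀ ∈ Finset.univ.filter
                (fun s : Fin n → Fin 4 => W s ≠ 0 ∧ s i ≠ 0) :=
              Finset.mem_filter.2 ⟨Finset.mem_univ _, hW0ne, hi'⟩
            rw [Finset.card_erase_of_mem hmem]
            exact Nat.sub_le_sub_right (hocc i) 1
        _ = (Finset.univ.filter (fun i => s₀ i ≠ 0)).card * (l - 1) := by
            rw [Finset.sum_const, smul_eq_mul]
        _ ≤ k * (l - 1) := Nat.mul_le_mul_right _ (hdeg s₀ hW0ne)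
    have habs0 : (0:ℝ) ≤ |W s₀| := abs_nonneg _
    have hDreal : ((Dfin.card : ℝ)) ≤ (k:ℝ) * ((l:ℝ) - 1) := by
      calc ((Dfin.card : ℝ)) ≤ ((k * (l-1) : ℕ) : ℝ) := Nat.cast_le.2 hDcard
        _ = (k:ℝ) * ((l:ℝ) - 1) := by
            rw [Nat.cast_mul, Nat.cast_sub hl, Nat.cast_one]
    have h1 : ∑ s ∈ Φ.filter (fun s => ∀ i, s₀ i ≠ 0 → s i = 0), |W s|
        ≤ ∑ s ∈ Φ.filter (fun s => ∀ i, s₀ i ≠ 0 → s i = 0), |W' s|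
          + ∑ s ∈ Φ.filter (fun s => ∀ i, s₀ i ≠ 0 → s i = 0), |W (g s)| := by
      rw [← Finset.sum_add_distrib]
      refine Finset.sum_le_sum ?_
      intro s hs
      have hPs : ∀ i, s₀ i ≠ 0 → s i = 0 := (Finset.mem_filter.1 hs).2
      have hWs : W s = W' s - ε * W (g s) := by
        rw [hW'def]; simp only [if_pos hPs, hgdef]; ring
      calc |W s| = |W' s - ε * W (g s)| := by rw [← hWs]
        _ = |W' s + -(ε * W (g s))| := by rw [sub_eq_add_neg]
        _ ≤ |W' s| + |-(ε * W (g s))| := abs_add_le _ _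
        _ = |W' s| + |W (g s)| := by rw [abs_neg, abs_mul, hεabs, one_mul]
    have h1a : ∑ s ∈ Φ.filter (fun s => ∀ i, s₀ i ≠ 0 → s i = 0), |W' s|
        ≤ ∑ s ∈ Φ, |W' s| :=
      Finset.sum_le_sum_of_subset_of_nonneg (Finset.filter_subset _ _)
        (fun _ _ _ => abs_nonneg _)
    have h1b : ∑ s ∈ Φ.filter (fun s => ∀ i, s₀ i ≠ 0 → s i = 0), |W (g s)|
        ≤ (Dfin.card : ℝ) * |W s₀| := by
      refine le_trans (sum_abs_le_of_bound W _ g |W s₀| ?_) ?_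
      · intro u hu hWg
        refine hmax (g u) hWg ?_
        intro h0
        have h3 : kadd (u i₀) (s₀ i₀) = 0 := congrFun h0 i₀
        rw [(Finset.mem_filter.1 hu).2 i₀ hi₀, zero_kadd] at h3
        exact hi₀ h3
      · refine mul_le_mul_of_nonneg_right (Nat.cast_le.2 ?_) habs0
        refine Finset.card_le_card_of_injOn g ?_ ?_
        · intro u hu
          have hu1 := Finset.mem_filter.1 hu
          have hWg : W (g u) ≠ 0 := hu1.2
          have hu2 := Finset.mem_filter.1 hu1.1
          have hPu : ∀ i, s₀ i ≠ 0 → u i = 0 := hu2.2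
          have hune : u ≠ 0 := (Finset.mem_filter.1 hu2.1).2
          refine Finset.mem_filter.2 ⟨Finset.mem_univ _, hWg, ?_, i₀, hi₀, ?_⟩
          · intro heq
            apply hune
            funext i
            have h3 : kadd (u i) (s₀ i) = s₀ i := congrFun heq i
            exact (kadd_eq_right_iff _ _).1 h3
          · show kadd (u i₀) (s₀ i₀) ≠ 0
            rw [hPu i₀ hi₀, zero_kadd]
            exact hi₀
        · intro u hu u' hu' heq
          funext i
          have h3 : kadd (u i) (s₀ i) = kadd (u' i) (s₀ i) := congrFun heq i
          rw [← kadd_kadd (u i) (s₀ i), h3, kadd_kadd]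
    have h2 : ∑ s ∈ Φ.filter (fun s => ¬∀ i, s₀ i ≠ 0 → s i = 0), |W s|
        ≤ |W s₀| + (Dfin.card : ℝ) * |W s₀| := by
      have hmem : s₀ ∈ Φ.filter (fun s => ¬∀ i, s₀ i ≠ 0 → s i = 0) :=
        Finset.mem_filter.2 ⟨Finset.mem_filter.2 ⟨Finset.mem_univ _, hs0ne⟩,
          fun h => hi₀ (h i₀ hi₀)⟩
      rw [← Finset.add_sum_erase _ _ hmem]
      refine add_le_add_right ?_ _
      refine le_trans (sum_abs_le_of_bound W _ (fun u => u) |W s₀| ?_) ?_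
      · intro u hu hWu
        have hu' := Finset.mem_erase.1 hu
        exact hmax u hWu (Finset.mem_filter.1 (Finset.mem_filter.1 hu'.2).1).2
      · refine mul_le_mul_of_nonneg_right (Nat.cast_le.2 (Finset.card_le_card ?_)) habs0
        intro u hu
        have hu1 := Finset.mem_filter.1 hu
        have hWu : W u ≠ 0 := hu1.2
        have hu2 := Finset.mem_erase.1 hu1.1
        have hu3 := Finset.mem_filter.1 hu2.2
        have hnP : ¬∀ i, s₀ i ≠ 0 → u i = 0 := hu3.2
        push_neg at hnP
        obtain ⟨i, hi1, hi2⟩ := hnP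
        exact Finset.mem_filter.2 ⟨Finset.mem_univ _, hWu, hu2.1, i, hi1, hi2⟩
    have hsplit : ∑ s ∈ Φ, |W s|
        = ∑ s ∈ Φ.filter (fun s => ∀ i, s₀ i ≠ 0 → s i = 0), |W s|
          + ∑ s ∈ Φ.filter (fun s => ¬∀ i, s₀ i ≠ 0 → s i = 0), |W s| :=
      (Finset.sum_filter_add_sum_filter_not Φ _ _).symm
    have hkcast : (1:ℝ) ≤ (k:ℝ) := by exact_mod_cast hk
    have hlcast : (1:ℝ) ≤ (l:ℝ) := by exact_mod_cast hl
    have hknn : (0:ℝ) ≤ (2*(k:ℝ) - 1) * |W s₀| :=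
      mul_nonneg (by linarith) habs0
    have hDa : (Dfin.card : ℝ) * |W s₀| ≤ ((k:ℝ)*((l:ℝ)-1)) * |W s₀| :=
      mul_le_mul_of_nonneg_right hDreal habs0
    have hmass : ∑ s ∈ Φ, |W s| ≤ ∑ s ∈ Φ, |W' s| + (2*(k:ℝ)*(l:ℝ)) * |W s₀| := by
      nlinarith [h1, h1a, h1b, h2, hsplit, hDa, hknn]
    have hW'0 : W' 0 = W 0 - |W s₀| := by
      have hcz : ∀ i : Fin n, s₀ i ≠ 0 → (0 : Fin n → Fin 4) i = 0 := fun _ _ => rfl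
      rw [hW'def]
      simp only [if_pos hcz]
      have hzz : (fun i => kadd ((0 : Fin n → Fin 4) i) (s₀ i)) = s₀ :=
        funext fun i => zero_kadd _
      rw [hzz, hεW]
      ring
    obtain ⟨c', hc'⟩ := ih W' hcard' hdeg' hocc'
    -- extract a good x from the average
    have hwnn : ∀ x : Fin n → Fin 4, 0 ≤ 1 + ε * chr s₀ x := by
      intro x
      have h1' : |ε * chr s₀ x| = 1 := by rw [abs_mul, hεabs, abs_chr, mul_one]
      have h2' := neg_abs_le (ε * chr s₀ x)
      rw [h1'] at h2'
      linarith
    have hsum1 : ∑ x : Fin n → Fin 4, ((1:ℝ) + ε * chr s₀ x) = (4:ℝ)^n := by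
      rw [Finset.sum_add_distrib]
      have hz : ∑ x : Fin n → Fin 4, ε * chr s₀ x = 0 := by
        rw [← Finset.mul_sum]
        have hzz : ∑ x : Fin n → Fin 4, chr s₀ x = 0 := by
          simp only [chr]
          rw [sum_prod_fn (fun i y => sgn (s₀ i) y)]
          exact Finset.prod_eq_zero (Finset.mem_univ i₀) (by rw [sum_sgn, if_neg hi₀])
        rw [hzz, mul_zero]
      rw [hz, add_zero, Finset.sum_const, Finset.card_univ, Fintype.card_fun,
        Fintype.card_fin, Fintype.card_fin, nsmul_eq_mul, mul_one]
      push_cast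
      ring
    obtain ⟨x₀, _, hx₀⟩ := Finset.exists_min_image Finset.univ
      (fun x : Fin n → Fin 4 => Fval W (fun i => if s₀ i ≠ 0 then x i else c' i))
      ⟨0, Finset.mem_univ 0⟩
    have hres := restrict_eq W s₀ ε c'
    have hmin : Fval W (fun i => if s₀ i ≠ 0 then x₀ i else c' i) ≤ Fval W' c' := by
      have hpow : (0:ℝ) < 4^n := by positivity
      have h6 : (4:ℝ)^n * Fval W (fun i => if s₀ i ≠ 0 then x₀ i else c' i)
          ≤ (4:ℝ)^n * Fval W' c' := by
        rw [← hres, ← hsum1, Finset.sum_mul]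
        exact Finset.sum_le_sum fun x _ =>
          mul_le_mul_of_nonneg_left (hx₀ x (Finset.mem_univ x)) (hwnn x)
      exact le_of_mul_le_mul_left h6 hpow
    refine ⟨(fun i => if s₀ i ≠ 0 then x₀ i else c' i), ?_⟩
    have hklpos : (0:ℝ) < 2*(k:ℝ)*(l:ℝ) := by nlinarith
    have hdiv : (∑ s ∈ Φ, |W s|) / (2*(k:ℝ)*(l:ℝ))
        ≤ (∑ s ∈ Φ, |W' s|) / (2*(k:ℝ)*(l:ℝ)) + |W s₀| := by
      rw [div_add' _ _ _ (ne_of_gt hklpos)]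
      gcongr
      linarith [hmass]
    calc Fval W (fun i => if s₀ i ≠ 0 then x₀ i else c' i) ≤ Fval W' c' := hmin
      _ ≤ W' 0 - (∑ s ∈ Φ, |W' s|)/(2*(k:ℝ)*(l:ℝ)) := hc'
      _ = W 0 - |W s₀| - (∑ s ∈ Φ, |W' s|)/(2*(k:ℝ)*(l:ℝ)) := by rw [hW'0]
      _ ≤ W 0 - (∑ s ∈ Φ, |W s|)/(2*(k:ℝ)*(l:ℝ)) := by linarith [hdiv]

def tetraC (c : Fin 4) : Fin 2 → ℂ := tetra (pmA c) (pmB c)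
def expVal1 (M : Matrix (Fin 2) (Fin 2) ℂ) (ψ : Fin 2 → ℂ) : ℂ :=
  ∑ v, ∑ w, (starRingEnd ℂ) (ψ v) * M v w * ψ w

lemma hs3 : Real.sqrt 3 * Real.sqrt 3 = 3 := Real.mul_self_sqrt (by norm_num)
lemma hs3le : Real.sqrt 3 ≤ 3 := by nlinarith [hs3, Real.sqrt_nonneg 3]
lemma hsp : Real.sqrt (3 + Real.sqrt 3) * Real.sqrt (3 + Real.sqrt 3) = 3 + Real.sqrt 3 :=
  Real.mul_self_sqrt (by nlinarith [Real.sqrt_nonneg 3])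
lemma hsm : Real.sqrt (3 - Real.sqrt 3) * Real.sqrt (3 - Real.sqrt 3) = 3 - Real.sqrt 3 :=
  Real.mul_self_sqrt (by nlinarith [hs3le])
lemma hs6 : Real.sqrt 6 * Real.sqrt 6 = 6 := Real.mul_self_sqrt (by norm_num)
lemma hs2 : Real.sqrt 2 * Real.sqrt 2 = 2 := Real.mul_self_sqrt (by norm_num)
lemma hspm : Real.sqrt (3 + Real.sqrt 3) * Real.sqrt (3 - Real.sqrt 3) = Real.sqrt 6 := by
  rw [← Real.sqrt_mul (by nlinarith [Real.sqrt_nonneg 3])]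
  congr 1
  nlinarith [hs3]
lemma hs26 : Real.sqrt 2 * Real.sqrt 6 = 2 * Real.sqrt 3 := by
  rw [← Real.sqrt_mul (by norm_num)]
  rw [show (2:ℝ) * 6 = 4 * 3 by norm_num, Real.sqrt_mul (by norm_num),
    show (4:ℝ) = 2^2 by norm_num, Real.sqrt_sq (by norm_num)]
lemma hs6pos : (0:ℝ) < Real.sqrt 6 := Real.sqrt_pos.2 (by norm_num)
lemma hs3pos : (0:ℝ) < Real.sqrt 3 := Real.sqrt_pos.2 (by norm_num)

lemma psi0_eq : ψpp 0 = ((Real.sqrt (3 + Real.sqrt 3) / Real.sqrt 6 : ℝ) : ℂ) := by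
  simp [ψpp]

lemma psi1_eq : ψpp 1 =
    ((Real.sqrt 2 * Real.sqrt (3 - Real.sqrt 3) / (2 * Real.sqrt 6) : ℝ) : ℂ) * (1 + I) := by
  have h1 : (↑Real.pi * I / 4 : ℂ) = ((Real.pi/4 : ℝ) : ℂ) * I := by push_cast; ring
  show Complex.exp (Real.pi * I / 4) * (Real.sqrt (3 - Real.sqrt 3) : ℂ) / (Real.sqrt 6 : ℂ) = _
  rw [h1, Complex.exp_mul_I, ← Complex.ofReal_cos, ← Complex.ofReal_sin,
    Real.cos_pi_div_four, Real.sin_pi_div_four]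
  push_cast
  ring

-- real identities
lemma re_norm : (Real.sqrt (3 + Real.sqrt 3) / Real.sqrt 6)^2
    + 2 * (Real.sqrt 2 * Real.sqrt (3 - Real.sqrt 3) / (2 * Real.sqrt 6))^2 = 1 := by
  calc (Real.sqrt (3 + Real.sqrt 3) / Real.sqrt 6)^2
      + 2 * (Real.sqrt 2 * Real.sqrt (3 - Real.sqrt 3) / (2 * Real.sqrt 6))^2
      = Real.sqrt (3 + Real.sqrt 3) * Real.sqrt (3 + Real.sqrt 3) / (Real.sqrt 6 * Real.sqrt 6)
        + Real.sqrt 2 * Real.sqrt 2 * (Real.sqrt (3 - Real.sqrt 3) * Real.sqrt (3 - Real.sqrt 3))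
          / (2 * (Real.sqrt 6 * Real.sqrt 6)) := by ring
    _ = (3 + Real.sqrt 3) / 6 + 2 * (3 - Real.sqrt 3) / (2 * 6) := by rw [hsp, hsm, hs2, hs6]
    _ = 1 := by ring

lemma re_X : 2 * (Real.sqrt (3 + Real.sqrt 3) / Real.sqrt 6)
    * (Real.sqrt 2 * Real.sqrt (3 - Real.sqrt 3) / (2 * Real.sqrt 6)) = (Real.sqrt 3)⁻¹ := by
  calc 2 * (Real.sqrt (3 + Real.sqrt 3) / Real.sqrt 6)
      * (Real.sqrt 2 * Real.sqrt (3 - Real.sqrt 3) / (2 * Real.sqrt 6))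
      = Real.sqrt 2 * (Real.sqrt (3 + Real.sqrt 3) * Real.sqrt (3 - Real.sqrt 3))
        / (Real.sqrt 6 * Real.sqrt 6) := by ring
    _ = Real.sqrt 2 * Real.sqrt 6 / 6 := by rw [hspm, hs6]
    _ = 2 * Real.sqrt 3 / 6 := by rw [hs26]
    _ = (Real.sqrt 3)⁻¹ := by
        rw [inv_eq_one_div, div_eq_div_iff (by norm_num) hs3pos.ne']
        linear_combination 2 * hs3

lemma re_Z : (Real.sqrt (3 + Real.sqrt 3) / Real.sqrt 6)^2
    - 2 * (Real.sqrt 2 * Real.sqrt (3 - Real.sqrt 3) / (2 * Real.sqrt 6))^2 = (Real.sqrt 3)⁻¹ := by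
  calc (Real.sqrt (3 + Real.sqrt 3) / Real.sqrt 6)^2
      - 2 * (Real.sqrt 2 * Real.sqrt (3 - Real.sqrt 3) / (2 * Real.sqrt 6))^2
      = Real.sqrt (3 + Real.sqrt 3) * Real.sqrt (3 + Real.sqrt 3) / (Real.sqrt 6 * Real.sqrt 6)
        - Real.sqrt 2 * Real.sqrt 2 * (Real.sqrt (3 - Real.sqrt 3) * Real.sqrt (3 - Real.sqrt 3))
          / (2 * (Real.sqrt 6 * Real.sqrt 6)) := by ring
    _ = (3 + Real.sqrt 3) / 6 - 2 * (3 - Real.sqrt 3) / (2 * 6) := by rw [hsp, hsm, hs2, hs6]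
    _ = Real.sqrt 3 / 3 := by ring
    _ = (Real.sqrt 3)⁻¹ := by
        rw [inv_eq_one_div, div_eq_div_iff (by norm_num) hs3pos.ne']
        linear_combination hs3

lemma psi_norm : (starRingEnd ℂ) (ψpp 0) * ψpp 0 + (starRingEnd ℂ) (ψpp 1) * ψpp 1 = 1 := by
  rw [psi0_eq, psi1_eq]
  simp only [_root_.map_mul, _root_.map_add, _root_.map_one, Complex.conj_ofReal, Complex.conj_I]
  have C := congrArg (fun r : ℝ => (r : ℂ)) re_norm
  push_cast at C ⊢
  linear_combination C - ((Real.sqrt 2 : ℂ) * (Real.sqrt (3 - Real.sqrt 3) : ℂ)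
    / (2 * (Real.sqrt 6 : ℂ)))^2 * Complex.I_mul_I

lemma psi_X : (starRingEnd ℂ) (ψpp 0) * ψpp 1 + (starRingEnd ℂ) (ψpp 1) * ψpp 0
    = ((Real.sqrt 3 : ℂ))⁻¹ := by
  rw [psi0_eq, psi1_eq]
  simp only [_root_.map_mul, _root_.map_add, _root_.map_one, Complex.conj_ofReal, Complex.conj_I]
  have C := congrArg (fun r : ℝ => (r : ℂ)) re_X
  push_cast at C ⊢
  linear_combination C

lemma psi_Y : (starRingEnd ℂ) (ψpp 0) * (-I * ψpp 1) + (starRingEnd ℂ) (ψpp 1) * (I * ψpp 0)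
    = ((Real.sqrt 3 : ℂ))⁻¹ := by
  rw [psi0_eq, psi1_eq]
  simp only [_root_.map_mul, _root_.map_add, _root_.map_one, Complex.conj_ofReal, Complex.conj_I]
  have C := congrArg (fun r : ℝ => (r : ℂ)) re_X
  push_cast at C ⊢
  linear_combination C - 2 * ((Real.sqrt (3 + Real.sqrt 3) : ℂ) / (Real.sqrt 6 : ℂ))
    * ((Real.sqrt 2 : ℂ) * (Real.sqrt (3 - Real.sqrt 3) : ℂ) / (2 * (Real.sqrt 6 : ℂ)))
    * Complex.I_mul_I

lemma psi_Z : (starRingEnd ℂ) (ψpp 0) * ψpp 0 - (starRingEnd ℂ) (ψpp 1) * ψpp 1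
    = ((Real.sqrt 3 : ℂ))⁻¹ := by
  rw [psi0_eq, psi1_eq]
  simp only [_root_.map_mul, _root_.map_add, _root_.map_one, Complex.conj_ofReal, Complex.conj_I]
  have C := congrArg (fun r : ℝ => (r : ℂ)) re_Z
  push_cast at C ⊢
  linear_combination C + ((Real.sqrt 2 : ℂ) * (Real.sqrt (3 - Real.sqrt 3) : ℂ)
    / (2 * (Real.sqrt 6 : ℂ)))^2 * Complex.I_mul_I

def vν : Fin 4 → ℝ := ![1, (Real.sqrt 3)⁻¹, (Real.sqrt 3)⁻¹, (Real.sqrt 3)⁻¹]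

lemma tetraC0 : tetraC 0 = ψpp := by
  have hM : tetraM (pmA 0) (pmB 0) = 1 := by norm_num [tetraM, pmA, pmB]
  funext x
  simp [tetraC, tetra, hM]

lemma tetraC1 : tetraC 1 = ![ψpp 1, ψpp 0] := by
  have hM : tetraM (pmA 1) (pmB 1) = σX := by norm_num [tetraM, pmA, pmB]
  funext x
  fin_cases x <;>
    simp [tetraC, tetra, hM, Matrix.mulVec, dotProduct, σX, Fin.sum_univ_two]

lemma tetraC2 : tetraC 2 = ![ψpp 0, -ψpp 1] := by
  have hM : tetraM (pmA 2) (pmB 2) = σZ := by norm_num [tetraM, pmA, pmB] <;> simp <;> norm_num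
  funext x
  fin_cases x <;>
    simp [tetraC, tetra, hM, Matrix.mulVec, dotProduct, σZ, Fin.sum_univ_two]

lemma tetraC3 : tetraC 3 = ![-(I * ψpp 1), I * ψpp 0] := by
  have hM : tetraM (pmA 3) (pmB 3) = σY := by norm_num [tetraM, pmA, pmB] <;> simp <;> norm_num
  funext x
  fin_cases x <;>
    simp [tetraC, tetra, hM, Matrix.mulVec, dotProduct, σY, Fin.sum_univ_two]

lemma expVal1_pauli (p c : Fin 4) :
    expVal1 (pauli p) (tetraC c) = ((sgn p c * vν p : ℝ) : ℂ) := by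
  have h00 : expVal1 (pauli 0) (tetraC 0) = ((sgn 0 0 * vν 0 : ℝ) : ℂ) := by
    rw [tetraC0]
    norm_num [expVal1, Fin.sum_univ_two, pauli, σX, σY, σZ, sgn, pmA, pmB, vν,
      Matrix.one_apply, _root_.map_mul, map_neg, Complex.conj_I]
    try push_cast
    try linear_combination psi_norm
  have h01 : expVal1 (pauli 0) (tetraC 1) = ((sgn 0 1 * vν 0 : ℝ) : ℂ) := by
    rw [tetraC1]
    norm_num [expVal1, Fin.sum_univ_two, pauli, σX, σY, σZ, sgn, pmA, pmB, vν,
      Matrix.one_apply, _root_.map_mul, map_neg, Complex.conj_I]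
    try push_cast
    try linear_combination psi_norm
  have h02 : expVal1 (pauli 0) (tetraC 2) = ((sgn 0 2 * vν 0 : ℝ) : ℂ) := by
    rw [tetraC2]
    norm_num [expVal1, Fin.sum_univ_two, pauli, σX, σY, σZ, sgn, pmA, pmB, vν,
      Matrix.one_apply, _root_.map_mul, map_neg, Complex.conj_I]
    try push_cast
    try linear_combination psi_norm
  have h03 : expVal1 (pauli 0) (tetraC 3) = ((sgn 0 3 * vν 0 : ℝ) : ℂ) := by
    rw [tetraC3]
    norm_num [expVal1, Fin.sum_univ_two, pauli, σX, σY, σZ, sgn, pmA, pmB, vν,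
      Matrix.one_apply, _root_.map_mul, map_neg, Complex.conj_I]
    try push_cast
    try linear_combination psi_norm - ((starRingEnd ℂ) (ψpp 0) * ψpp 0 + (starRingEnd ℂ) (ψpp 1) * ψpp 1) * Complex.I_mul_I
  have h10 : expVal1 (pauli 1) (tetraC 0) = ((sgn 1 0 * vν 1 : ℝ) : ℂ) := by
    rw [tetraC0]
    norm_num [expVal1, Fin.sum_univ_two, pauli, σX, σY, σZ, sgn, pmA, pmB, vν,
      Matrix.one_apply, _root_.map_mul, map_neg, Complex.conj_I]
    try push_cast
    try linear_combination psi_X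
  have h11 : expVal1 (pauli 1) (tetraC 1) = ((sgn 1 1 * vν 1 : ℝ) : ℂ) := by
    rw [tetraC1]
    norm_num [expVal1, Fin.sum_univ_two, pauli, σX, σY, σZ, sgn, pmA, pmB, vν,
      Matrix.one_apply, _root_.map_mul, map_neg, Complex.conj_I]
    try push_cast
    try linear_combination psi_X
  have h12 : expVal1 (pauli 1) (tetraC 2) = ((sgn 1 2 * vν 1 : ℝ) : ℂ) := by
    rw [tetraC2]
    norm_num [expVal1, Fin.sum_univ_two, pauli, σX, σY, σZ, sgn, pmA, pmB, vν,
      Matrix.one_apply, _root_.map_mul, map_neg, Complex.conj_I]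
    try push_cast
    try linear_combination -psi_X
  have h13 : expVal1 (pauli 1) (tetraC 3) = ((sgn 1 3 * vν 1 : ℝ) : ℂ) := by
    rw [tetraC3]
    norm_num [expVal1, Fin.sum_univ_two, pauli, σX, σY, σZ, sgn, pmA, pmB, vν,
      Matrix.one_apply, _root_.map_mul, map_neg, Complex.conj_I]
    try push_cast
    try linear_combination ((starRingEnd ℂ) (ψpp 0) * ψpp 1 + (starRingEnd ℂ) (ψpp 1) * ψpp 0) * Complex.I_mul_I - psi_X
  have h20 : expVal1 (pauli 2) (tetraC 0) = ((sgn 2 0 * vν 2 : ℝ) : ℂ) := by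
    rw [tetraC0]
    norm_num [expVal1, Fin.sum_univ_two, pauli, σX, σY, σZ, sgn, pmA, pmB, vν,
      Matrix.one_apply, _root_.map_mul, map_neg, Complex.conj_I]
    simp
    try push_cast
    try linear_combination psi_Y
  have h21 : expVal1 (pauli 2) (tetraC 1) = ((sgn 2 1 * vν 2 : ℝ) : ℂ) := by
    rw [tetraC1]
    norm_num [expVal1, Fin.sum_univ_two, pauli, σX, σY, σZ, sgn, pmA, pmB, vν,
      Matrix.one_apply, _root_.map_mul, map_neg, Complex.conj_I]
    simp
    try push_cast
    try linear_combination -psi_Y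
  have h22 : expVal1 (pauli 2) (tetraC 2) = ((sgn 2 2 * vν 2 : ℝ) : ℂ) := by
    rw [tetraC2]
    norm_num [expVal1, Fin.sum_univ_two, pauli, σX, σY, σZ, sgn, pmA, pmB, vν,
      Matrix.one_apply, _root_.map_mul, map_neg, Complex.conj_I]
    simp
    try push_cast
    try linear_combination -psi_Y
  have h23 : expVal1 (pauli 2) (tetraC 3) = ((sgn 2 3 * vν 2 : ℝ) : ℂ) := by
    rw [tetraC3]
    norm_num [expVal1, Fin.sum_univ_two, pauli, σX, σY, σZ, sgn, pmA, pmB, vν,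
      Matrix.one_apply, _root_.map_mul, map_neg, Complex.conj_I]
    simp
    try push_cast
    try linear_combination psi_Y + I * ((starRingEnd ℂ) (ψpp 0) * ψpp 1 - (starRingEnd ℂ) (ψpp 1) * ψpp 0) * Complex.I_mul_I
  have h30 : expVal1 (pauli 3) (tetraC 0) = ((sgn 3 0 * vν 3 : ℝ) : ℂ) := by
    rw [tetraC0]
    norm_num [expVal1, Fin.sum_univ_two, pauli, σX, σY, σZ, sgn, pmA, pmB, vν,
      Matrix.one_apply, _root_.map_mul, map_neg, Complex.conj_I]
    simp
    try push_cast
    try linear_combination psi_Z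
  have h31 : expVal1 (pauli 3) (tetraC 1) = ((sgn 3 1 * vν 3 : ℝ) : ℂ) := by
    rw [tetraC1]
    norm_num [expVal1, Fin.sum_univ_two, pauli, σX, σY, σZ, sgn, pmA, pmB, vν,
      Matrix.one_apply, _root_.map_mul, map_neg, Complex.conj_I]
    simp
    try push_cast
    try linear_combination -psi_Z
  have h32 : expVal1 (pauli 3) (tetraC 2) = ((sgn 3 2 * vν 3 : ℝ) : ℂ) := by
    rw [tetraC2]
    norm_num [expVal1, Fin.sum_univ_two, pauli, σX, σY, σZ, sgn, pmA, pmB, vν,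
      Matrix.one_apply, _root_.map_mul, map_neg, Complex.conj_I]
    simp
    try push_cast
    try linear_combination psi_Z
  have h33 : expVal1 (pauli 3) (tetraC 3) = ((sgn 3 3 * vν 3 : ℝ) : ℂ) := by
    rw [tetraC3]
    norm_num [expVal1, Fin.sum_univ_two, pauli, σX, σY, σZ, sgn, pmA, pmB, vν,
      Matrix.one_apply, _root_.map_mul, map_neg, Complex.conj_I]
    simp
    try push_cast
    try linear_combination ((starRingEnd ℂ) (ψpp 0) * ψpp 0 - (starRingEnd ℂ) (ψpp 1) * ψpp 1) * Complex.I_mul_I - psi_Z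
  fin_cases p <;> fin_cases c
  · exact h00
  · exact h01
  · exact h02
  · exact h03
  · exact h10
  · exact h11
  · exact h12
  · exact h13
  · exact h20
  · exact h21
  · exact h22
  · exact h23
  · exact h30
  · exact h31
  · exact h32
  · exact h33

lemma expValN_pauliString (s : Fin n → Fin 4) (ψ : Fin n → Fin 2 → ℂ) :
    expValN (pauliString s) (prodState ψ) = ∏ i, expVal1 (pauli (s i)) (ψ i) := by
  have h1 : ∀ v w : Fin n → Fin 2,
      (starRingEnd ℂ) (prodState ψ v) * (pauliString s v w) * (prodState ψ w)
      = ∏ i, ((starRingEnd ℂ) (ψ i (v i)) * pauli (s i) (v i) (w i) * ψ i (w i)) := by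
    intro v w
    rw [prodState, prodState, pauliString, map_prod, ← Finset.prod_mul_distrib,
      ← Finset.prod_mul_distrib]
  rw [expValN]
  rw [Finset.sum_congr rfl (fun v _ => Finset.sum_congr rfl (fun w _ => h1 v w))]
  rw [Finset.sum_congr rfl (fun v _ =>
    sum_prod_fn (fun i y => (starRingEnd ℂ) (ψ i (v i)) * pauli (s i) (v i) y * ψ i y))]
  rw [sum_prod_fn (fun i x => ∑ y, (starRingEnd ℂ) (ψ i x) * pauli (s i) x y * ψ i y)]
  rfl

lemma expValN_hamOf (Hhat : (Fin n → Fin 4) → ℝ) (Ψ : (Fin n → Fin 2) → ℂ) :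
    expValN (hamOf Hhat) Ψ = ∑ s : Fin n → Fin 4, (Hhat s : ℂ) * expValN (pauliString s) Ψ := by
  rw [expValN]
  have h1 : ∀ v w, (starRingEnd ℂ) (Ψ v) * (hamOf Hhat v w) * Ψ w
      = ∑ s : Fin n → Fin 4, (Hhat s : ℂ) * ((starRingEnd ℂ) (Ψ v) * pauliString s v w * Ψ w) := by
    intro v w
    rw [hamOf, Matrix.sum_apply, Finset.mul_sum, Finset.sum_mul]
    refine Finset.sum_congr rfl fun x _ => ?_
    simp only [Matrix.smul_apply, smul_eq_mul]
    ring
  rw [Finset.sum_congr rfl (fun v _ => Finset.sum_congr rfl (fun w _ => h1 v w))]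
  rw [Finset.sum_congr rfl (fun v (_ : v ∈ Finset.univ) => Finset.sum_comm)]
  rw [Finset.sum_comm]
  refine Finset.sum_congr rfl fun s _ => ?_
  rw [expValN, Finset.mul_sum]
  refine Finset.sum_congr rfl fun v _ => ?_
  rw [Finset.mul_sum]

lemma prodState_norm (ψ : Fin n → Fin 2 → ℂ)
    (h : ∀ i, ∑ x, (starRingEnd ℂ) (ψ i x) * ψ i x = 1) :
    star (prodState ψ) ⬝ᵥ prodState ψ = 1 := by
  have h1 : ∀ v : Fin n → Fin 2, (star (prodState ψ)) v * prodState ψ v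
      = ∏ i, ((starRingEnd ℂ) (ψ i (v i)) * ψ i (v i)) := by
    intro v
    rw [Pi.star_apply, prodState, Complex.star_def, map_prod, ← Finset.prod_mul_distrib]
  rw [dotProduct]
  rw [Finset.sum_congr rfl (fun v _ => h1 v)]
  rw [sum_prod_fn (fun i x => (starRingEnd ℂ) (ψ i x) * ψ i x)]
  rw [Finset.prod_congr rfl (fun i _ => h i)]
  exact Finset.prod_const_one

lemma rayleigh_min {m : Type*} [Fintype m] [DecidableEq m] [Nonempty m]
    (A : Matrix m m ℂ) (hA : A.IsHermitian) (Ψ : m → ℂ)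
    (hΨ : star Ψ ⬝ᵥ Ψ = 1) : (⨅ i, hA.eigenvalues i) ≤ (star Ψ ⬝ᵥ A *ᵥ Ψ).re := by
  set U : Matrix m m ℂ := (Matrix.IsHermitian.eigenvectorUnitary hA : Matrix m m ℂ) with hUdef
  have hUU : U * Uᴴ = 1 := by
    rw [← Matrix.star_eq_conjTranspose]
    exact (Matrix.mem_unitaryGroup_iff).mp (Matrix.IsHermitian.eigenvectorUnitary hA).2
  set φ : m → ℂ := star U *ᵥ Ψ with hφdef
  have hsv : star Ψ ᵥ* U = star φ := by
    rw [hφdef, Matrix.star_mulVec, Matrix.star_eq_conjTranspose,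
      Matrix.conjTranspose_conjTranspose]
  have key : star Ψ ⬝ᵥ A *ᵥ Ψ = ∑ i, (hA.eigenvalues i : ℂ) * ((starRingEnd ℂ) (φ i) * φ i) := by
    conv_lhs => rw [hA.spectral_theorem, Unitary.conjStarAlgAut_apply]
    rw [← Matrix.mulVec_mulVec, ← Matrix.mulVec_mulVec, dotProduct_mulVec, hsv]
    rw [dotProduct]
    refine Finset.sum_congr rfl fun i _ => ?_
    rw [Matrix.mulVec_diagonal, Pi.star_apply, Complex.star_def]
    have hco : (RCLike.ofReal ∘ hA.eigenvalues) i = ((hA.eigenvalues i : ℝ) : ℂ) := rfl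
    rw [hco]
    ring
  have hnorm : star φ ⬝ᵥ φ = 1 := by
    rw [hφdef, Matrix.star_mulVec, Matrix.star_eq_conjTranspose,
      Matrix.conjTranspose_conjTranspose, ← dotProduct_mulVec,
      Matrix.mulVec_mulVec, hUU, Matrix.one_mulVec, hΨ]
  have hnormsq : ∑ i, Complex.normSq (φ i) = 1 := by
    have h2 : ((∑ i, Complex.normSq (φ i) : ℝ) : ℂ) = 1 := by
      push_cast
      rw [← hnorm, dotProduct]
      refine Finset.sum_congr rfl fun i _ => ?_
      rw [Pi.star_apply, Complex.star_def, mul_comm, Complex.mul_conj]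
    exact_mod_cast h2
  have hre : (star Ψ ⬝ᵥ A *ᵥ Ψ).re = ∑ i, hA.eigenvalues i * Complex.normSq (φ i) := by
    rw [key, Complex.re_sum]
    refine Finset.sum_congr rfl fun i _ => ?_
    have h3 : (starRingEnd ℂ) (φ i) * φ i = ((Complex.normSq (φ i) : ℝ) : ℂ) := by
      rw [mul_comm, Complex.mul_conj]
    rw [h3, ← Complex.ofReal_mul, Complex.ofReal_re]
  rw [hre]
  have hbdd : ∀ i, (⨅ j, hA.eigenvalues j) ≤ hA.eigenvalues i := fun i =>
    ciInf_le (Finite.bddBelow_range _) i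
  calc (⨅ j, hA.eigenvalues j) = ∑ i, (⨅ j, hA.eigenvalues j) * Complex.normSq (φ i) := by
        rw [← Finset.mul_sum, hnormsq, mul_one]
    _ ≤ ∑ i, hA.eigenvalues i * Complex.normSq (φ i) :=
        Finset.sum_le_sum fun i _ => mul_le_mul_of_nonneg_right (hbdd i) (Complex.normSq_nonneg _)


lemma expVal1_one (ψ : Fin 2 → ℂ) :
    expVal1 (pauli 0) ψ = ∑ x, (starRingEnd ℂ) (ψ x) * ψ x := by
  simp [expVal1, pauli, Matrix.one_apply, Fin.sum_univ_two]

lemma dot_expValN {n : ℕ} (M : Matrix (Fin n → Fin 2) (Fin n → Fin 2) ℂ)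
    (Ψ : (Fin n → Fin 2) → ℂ) : star Ψ ⬝ᵥ M *ᵥ Ψ = expValN M Ψ := by
  rw [dotProduct, expValN]
  refine Finset.sum_congr rfl fun v _ => ?_
  rw [Pi.star_apply, Complex.star_def, Matrix.mulVec, dotProduct, Finset.mul_sum]
  refine Finset.sum_congr rfl fun w _ => ?_
  ring

lemma vν_ne (p : Fin 4) (hp : p ≠ 0) : vν p = (Real.sqrt 3)⁻¹ := by
  fin_cases p
  · exact absurd rfl hp
  all_goals simp [vν]

lemma vν_prod {n : ℕ} (s : Fin n → Fin 4) :
    ∏ i, vν (s i) = ((Real.sqrt 3)⁻¹)^(weight s) := by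
  rw [← Finset.prod_filter_mul_prod_filter_not Finset.univ (fun i => s i ≠ 0)]
  rw [Finset.prod_congr rfl (fun i hi => vν_ne (s i) (Finset.mem_filter.1 hi).2)]
  rw [Finset.prod_congr rfl (fun i hi =>
    (show vν (s i) = 1 by rw [not_not.1 (Finset.mem_filter.1 hi).2]; rfl))]
  rw [Finset.prod_const, Finset.prod_const_one, mul_one, weight]

lemma Hexp {n : ℕ} (Hhat : (Fin n → Fin 4) → ℝ) (c : Fin n → Fin 4) :
    expValN (hamOf Hhat) (prodState (fun i => tetraC (c i)))
    = ((Fval (fun s => Hhat s * ((Real.sqrt 3)⁻¹)^(weight s)) c : ℝ) : ℂ) := by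
  rw [expValN_hamOf]
  have h1 : ∀ s : Fin n → Fin 4,
      expValN (pauliString s) (prodState (fun i => tetraC (c i)))
      = ((chr s c * ((Real.sqrt 3)⁻¹)^(weight s) : ℝ) : ℂ) := by
    intro s
    rw [expValN_pauliString]
    rw [Finset.prod_congr rfl (fun i _ => expVal1_pauli (s i) (c i))]
    rw [← Complex.ofReal_prod]
    congr 1
    rw [Finset.prod_mul_distrib, vν_prod, chr]
  rw [Finset.sum_congr rfl (fun s (_ : s ∈ Finset.univ) => by rw [h1 s])]
  rw [show (((Fval (fun s => Hhat s * ((Real.sqrt 3)⁻¹)^(weight s)) c : ℝ)) : ℂ)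
      = ∑ s : Fin n → Fin 4,
          ((Hhat s * ((Real.sqrt 3)⁻¹)^(weight s) * chr s c : ℝ) : ℂ) from by
    rw [Fval]; push_cast; rfl]
  refine Finset.sum_congr rfl fun s _ => ?_
  push_cast
  ring

end Aux

theorem stmt_16 (n k ℓ : ℕ) (Hhat : (Fin n → Fin 4) → ℝ)
    (hH : (hamOf Hhat).IsHermitian)
    (htr : Hhat (fun _ => 0) = 0)
    (hdeg : ∀ s, Hhat s ≠ 0 → weight s ≤ k)
    (hℓ : ∀ i : Fin n,
      (Finset.univ.filter (fun s : Fin n → Fin 4 => Hhat s ≠ 0 ∧ s i ≠ 0)).card ≤ ℓ) :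
    (⨅ v, hH.eigenvalues v)
      ≤ -(((Real.sqrt 3)⁻¹) ^ k * (∑ s : Fin n → Fin 4, |Hhat s|) / (4 * k * ℓ)) := by
  classical
  set W : (Fin n → Fin 4) → ℝ := fun s => Hhat s * ((Real.sqrt 3)⁻¹)^(weight s) with hWdef
  have hsq_nonneg : (0:ℝ) ≤ (Real.sqrt 3)⁻¹ := inv_nonneg.2 (Real.sqrt_nonneg 3)
  have hsqle : (Real.sqrt 3)⁻¹ ≤ 1 := by
    have h1 : (1:ℝ) ≤ Real.sqrt 3 := by nlinarith [hs3, Real.sqrt_nonneg 3]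
    exact inv_le_one_of_one_le₀ h1
  have main : ∀ c : Fin n → Fin 4, (⨅ v, hH.eigenvalues v) ≤ Fval W c := by
    intro c
    have hψ : ∀ i, ∑ x, (starRingEnd ℂ) (tetraC (c i) x) * tetraC (c i) x = 1 := by
      intro i
      rw [← expVal1_one, expVal1_pauli 0 (c i)]
      norm_num [sgn, vν]
    have hnorm1 := prodState_norm (fun i => tetraC (c i)) hψ
    have hray := rayleigh_min (hamOf Hhat) hH (prodState (fun i => tetraC (c i))) hnorm1
    rw [dot_expValN, Hexp Hhat c, Complex.ofReal_re] at hray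
    exact hray
  by_cases hkl : 1 ≤ k ∧ 1 ≤ ℓ
  · obtain ⟨hk, hl⟩ := hkl
    have hW0 : W 0 = 0 := by
      rw [hWdef]
      have h0 : Hhat (0 : Fin n → Fin 4) = 0 := htr
      simp only [h0, zero_mul]
    have hdeg' : ∀ s, W s ≠ 0 → (Finset.univ.filter (fun i => s i ≠ 0)).card ≤ k := by
      intro s hs
      refine hdeg s ?_
      intro h
      exact hs (by rw [hWdef]; simp [h])
    have hocc' : ∀ i, (Finset.univ.filter
        (fun s : Fin n → Fin 4 => W s ≠ 0 ∧ s i ≠ 0)).card ≤ ℓ := by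
      intro i
      refine le_trans (Finset.card_le_card ?_) (hℓ i)
      intro s hs
      obtain ⟨hW, hsi⟩ := (Finset.mem_filter.1 hs).2
      refine Finset.mem_filter.2 ⟨Finset.mem_univ _, ?_, hsi⟩
      intro h
      exact hW (by rw [hWdef]; simp [h])
    obtain ⟨c, hc⟩ := key_step k ℓ hk hl
      (Finset.univ.filter (fun s : Fin n → Fin 4 => W s ≠ 0 ∧ s ≠ 0)).card W
      le_rfl hdeg' hocc'
    rw [hW0, zero_sub] at hc
    refine le_trans (main c) (le_trans hc ?_)
    have hTW : ((Real.sqrt 3)⁻¹)^k * (∑ s : Fin n → Fin 4, |Hhat s|)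
        ≤ ∑ s ∈ Finset.univ.filter (fun s : Fin n → Fin 4 => s ≠ 0), |W s| := by
      have hsum0 : ∑ s : Fin n → Fin 4, |Hhat s|
          = ∑ s ∈ Finset.univ.filter (fun s : Fin n → Fin 4 => s ≠ 0), |Hhat s| := by
        rw [← Finset.sum_filter_add_sum_filter_not Finset.univ
          (fun s : Fin n → Fin 4 => s ≠ 0) (fun s => |Hhat s|)]
        have hz2 : ∑ s ∈ Finset.univ.filter (fun s : Fin n → Fin 4 => ¬s ≠ 0), |Hhat s| = 0 := by
          refine Finset.sum_eq_zero fun s hs => ?_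
          have h0 : s = 0 := not_not.1 (Finset.mem_filter.1 hs).2
          rw [h0, abs_eq_zero]
          exact htr
        rw [hz2, add_zero]
      rw [hsum0, Finset.mul_sum]
      refine Finset.sum_le_sum fun s hs => ?_
      by_cases hHs : Hhat s = 0
      · rw [hWdef]; simp [hHs]
      · have hw : weight s ≤ k := hdeg s hHs
        have habsW : |W s| = |Hhat s| * ((Real.sqrt 3)⁻¹)^(weight s) := by
          rw [hWdef]
          simp only
          rw [abs_mul, _root_.abs_of_nonneg (pow_nonneg hsq_nonneg _)]
        rw [habsW, mul_comm (((Real.sqrt 3)⁻¹)^k)]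
        exact mul_le_mul_of_nonneg_left
          (pow_le_pow_of_le_one hsq_nonneg hsqle hw) (abs_nonneg _)
    have hkR : (1:ℝ) ≤ (k:ℝ) := by exact_mod_cast hk
    have hlR : (1:ℝ) ≤ (ℓ:ℝ) := by exact_mod_cast hl
    have h2kl : (0:ℝ) < 2*(k:ℝ)*(ℓ:ℝ) := by nlinarith
    have hnum : (0:ℝ) ≤ ((Real.sqrt 3)⁻¹)^k * (∑ s : Fin n → Fin 4, |Hhat s|) :=
      mul_nonneg (pow_nonneg hsq_nonneg _) (Finset.sum_nonneg fun s _ => abs_nonneg _)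
    refine neg_le_neg ?_
    calc ((Real.sqrt 3)⁻¹)^k * (∑ s : Fin n → Fin 4, |Hhat s|) / (4*(k:ℝ)*(ℓ:ℝ))
        ≤ ((Real.sqrt 3)⁻¹)^k * (∑ s : Fin n → Fin 4, |Hhat s|) / (2*(k:ℝ)*(ℓ:ℝ)) := by
          refine div_le_div_of_nonneg_left hnum h2kl (by nlinarith)
      _ ≤ (∑ s ∈ Finset.univ.filter (fun s : Fin n → Fin 4 => s ≠ 0), |W s|)
            / (2*(k:ℝ)*(ℓ:ℝ)) := by
          gcongr
  · have hz : ∀ s, Hhat s = 0 := by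
      intro s
      by_cases hs : s = (fun _ => 0)
      · rw [hs]; exact htr
      · have hex : ∃ i, s i ≠ 0 := by
          by_contra h; push_neg at h; exact hs (funext h)
        obtain ⟨i, hi⟩ := hex
        by_contra hW
        by_cases hk0 : 1 ≤ k
        · have hl0 : ℓ = 0 := by omega
          have hmem : s ∈ Finset.univ.filter
              (fun s : Fin n → Fin 4 => Hhat s ≠ 0 ∧ s i ≠ 0) :=
            Finset.mem_filter.2 ⟨Finset.mem_univ _, hW, hi⟩
          have hcp := Finset.card_pos.2 ⟨s, hmem⟩
          have h0 := hℓ i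
          rw [hl0] at h0
          have hc0 : (Finset.univ.filter
              (fun s : Fin n → Fin 4 => Hhat s ≠ 0 ∧ s i ≠ 0)).card = 0 := Nat.le_zero.1 h0
          rw [hc0] at hcp
          exact absurd hcp (lt_irrefl 0)
        · have hk' : k = 0 := by omega
          have hwk := hdeg s hW
          rw [hk'] at hwk
          have hwz : (Finset.univ.filter (fun i => s i ≠ 0)).card = 0 := by
            have : weight s = 0 := by omega
            exact this
          have hem := Finset.card_eq_zero.1 hwz
          have hmem : i ∈ Finset.univ.filter (fun i => s i ≠ 0) :=
            Finset.mem_filter.2 ⟨Finset.mem_univ _, hi⟩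
          rw [hem] at hmem
          exact absurd hmem (Finset.notMem_empty i)
    have hzsum : (∑ s : Fin n → Fin 4, |Hhat s|) = 0 :=
      Finset.sum_eq_zero fun s _ => abs_eq_zero.2 (hz s)
    rw [hzsum]
    have hFval : Fval W (fun _ => 0) = 0 :=
      Finset.sum_eq_zero fun s _ => by rw [hWdef]; simp [hz s]
    have hm := main (fun _ => 0)
    rw [hFval] at hm
    simpa using hm
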